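/- For every integer n ≥ 5, the commutator subgroup SG_n' of the singular braid group SG_n is generated by a set of at most 2n − 4 elements; i.e., there exists a subset S of SG_n with cardinality at most 2n − 4 whose generated subgroup equals [SG_n, SG_n]. -/

import Mathlib

namespace SingBraid

/-- The free-group generator word for `σ_{i+1}` (0-indexed `i`). -/
def σw (n : ℕ) (i : Fin (n-1)) : FreeGroup (Fin (n-1) ⊕ Fin (n-1)) := FreeGroup.of (Sum.inl i)

/-- The free-group generator word for `ρ_{i+1}` (0-indexed `i`). -/
def ρw (n : ℕ) (i : Fin (n-1)) : FreeGroup (Fin (n-1) ⊕ Fin (n-1)) := FreeGroup.of (Sum.inr i)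

/-- Defining relators of the singular braid group `SG_n`. -/
def sgRels (n : ℕ) : Set (FreeGroup (Fin (n-1) ⊕ Fin (n-1))) :=
  {r | ∃ i j : Fin (n-1), ((i:ℕ)+1 < (j:ℕ) ∨ (j:ℕ)+1 < (i:ℕ)) ∧
      r = σw n i * σw n j * (σw n i)⁻¹ * (σw n j)⁻¹} ∪
  {r | ∃ i j : Fin (n-1), (j:ℕ) = (i:ℕ)+1 ∧
      r = σw n i * σw n j * σw n i * (σw n j * σw n i * σw n j)⁻¹} ∪
  {r | ∃ i j : Fin (n-1), ((i:ℕ)+1 < (j:ℕ) ∨ (j:ℕ)+1 < (i:ℕ)) ∧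
      r = ρw n i * ρw n j * (ρw n i)⁻¹ * (ρw n j)⁻¹} ∪
  {r | ∃ i j : Fin (n-1), (j:ℕ) = (i:ℕ)+1 ∧
      r = ρw n i * σw n j * σw n i * (σw n j * σw n i * ρw n j)⁻¹} ∪
  {r | ∃ i j : Fin (n-1), (j:ℕ) = (i:ℕ)+1 ∧
      r = ρw n j * σw n i * σw n j * (σw n i * σw n j * ρw n i)⁻¹} ∪
  {r | ∃ i j : Fin (n-1), (i = j ∨ (i:ℕ)+1 < (j:ℕ) ∨ (j:ℕ)+1 < (i:ℕ)) ∧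
      r = σw n i * ρw n j * (σw n i)⁻¹ * (ρw n j)⁻¹}

/-- The singular braid group `SG_n`, given by the Baez–Birman presentation. -/
abbrev SG (n : ℕ) := PresentedGroup (sgRels n)

/-- The generator `σ_{i+1}` of `SG_n` (0-indexed `i`). -/
def σ (n : ℕ) (i : Fin (n-1)) : SG n := PresentedGroup.of (Sum.inl i)

/-- The generator `ρ_{i+1}` of `SG_n` (0-indexed `i`). -/
def ρ (n : ℕ) (i : Fin (n-1)) : SG n := PresentedGroup.of (Sum.inr i)

end SingBraid

set_option linter.unusedVariables false

namespace SingBraid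

lemma mk_rel {n : ℕ} {r : FreeGroup (Fin (n-1) ⊕ Fin (n-1))} (h : r ∈ sgRels n) :
    (QuotientGroup.mk r : SG n) = 1 :=
  (QuotientGroup.eq_one_iff _).mpr (Subgroup.subset_normalClosure h)

lemma mk_σw {n : ℕ} (i : Fin (n-1)) : (QuotientGroup.mk (σw n i) : SG n) = σ n i := rfl
lemma mk_ρw {n : ℕ} (i : Fin (n-1)) : (QuotientGroup.mk (ρw n i) : SG n) = ρ n i := rfl

lemma comm_σσ {n : ℕ} {i j : Fin (n-1)} (h : (i:ℕ)+1 < (j:ℕ) ∨ (j:ℕ)+1 < (i:ℕ)) :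
    Commute (σ n i) (σ n j) := by
  have h1 := mk_rel (n := n)
    (Or.inl (Or.inl (Or.inl (Or.inl (Or.inl ⟨i, j, h, rfl⟩)))))
  simp only [QuotientGroup.mk_mul, QuotientGroup.mk_inv, mk_σw] at h1
  exact commutatorElement_eq_one_iff_commute.mp (by rw [commutatorElement_def]; exact h1)

lemma rel_braid {n : ℕ} {i j : Fin (n-1)} (h : (j:ℕ) = (i:ℕ)+1) :
    σ n i * σ n j * σ n i = σ n j * σ n i * σ n j := by
  have h1 := mk_rel (n := n)
    (Or.inl (Or.inl (Or.inl (Or.inl (Or.inr ⟨i, j, h, rfl⟩)))))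
  simp only [QuotientGroup.mk_mul, QuotientGroup.mk_inv, mk_σw] at h1
  exact mul_inv_eq_one.mp h1

lemma comm_ρρ {n : ℕ} {i j : Fin (n-1)} (h : (i:ℕ)+1 < (j:ℕ) ∨ (j:ℕ)+1 < (i:ℕ)) :
    Commute (ρ n i) (ρ n j) := by
  have h1 := mk_rel (n := n)
    (Or.inl (Or.inl (Or.inl (Or.inr ⟨i, j, h, rfl⟩))))
  simp only [QuotientGroup.mk_mul, QuotientGroup.mk_inv, mk_ρw] at h1
  exact commutatorElement_eq_one_iff_commute.mp (by rw [commutatorElement_def]; exact h1)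

lemma rel_mix1 {n : ℕ} {i j : Fin (n-1)} (h : (j:ℕ) = (i:ℕ)+1) :
    ρ n i * σ n j * σ n i = σ n j * σ n i * ρ n j := by
  have h1 := mk_rel (n := n)
    (Or.inl (Or.inl (Or.inr ⟨i, j, h, rfl⟩)))
  simp only [QuotientGroup.mk_mul, QuotientGroup.mk_inv, mk_σw, mk_ρw] at h1
  exact mul_inv_eq_one.mp h1

lemma rel_mix2 {n : ℕ} {i j : Fin (n-1)} (h : (j:ℕ) = (i:ℕ)+1) :
    ρ n j * σ n i * σ n j = σ n i * σ n j * ρ n i := by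
  have h1 := mk_rel (n := n)
    (Or.inl (Or.inr ⟨i, j, h, rfl⟩))
  simp only [QuotientGroup.mk_mul, QuotientGroup.mk_inv, mk_σw, mk_ρw] at h1
  exact mul_inv_eq_one.mp h1

lemma comm_σρ {n : ℕ} {i j : Fin (n-1)}
    (h : i = j ∨ (i:ℕ)+1 < (j:ℕ) ∨ (j:ℕ)+1 < (i:ℕ)) :
    Commute (σ n i) (ρ n j) := by
  have h1 := mk_rel (n := n) (Or.inr ⟨i, j, h, rfl⟩)
  simp only [QuotientGroup.mk_mul, QuotientGroup.mk_inv, mk_σw, mk_ρw] at h1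
  exact commutatorElement_eq_one_iff_commute.mp (by rw [commutatorElement_def]; exact h1)

/- ### Abelianization facts -/

lemma ab_σ_step {n : ℕ} {i j : Fin (n-1)} (h : (j:ℕ) = (i:ℕ)+1) :
    Abelianization.of (σ n i) = Abelianization.of (σ n j) := by
  have h1 := congrArg (Abelianization.of (G := SG n)) (rel_braid h)
  simp only [map_mul] at h1
  have h2 : Abelianization.of (σ n i) * (Abelianization.of (σ n j) * Abelianization.of (σ n i))
      = Abelianization.of (σ n j) * (Abelianization.of (σ n j) * Abelianization.of (σ n i)) := by
    rw [← mul_assoc, h1]; exact mul_comm _ _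
  exact mul_right_cancel h2

lemma ab_ρ_step {n : ℕ} {i j : Fin (n-1)} (h : (j:ℕ) = (i:ℕ)+1) :
    Abelianization.of (ρ n i) = Abelianization.of (ρ n j) := by
  have h1 := congrArg (Abelianization.of (G := SG n)) (rel_mix1 h)
  simp only [map_mul] at h1
  have h2 : Abelianization.of (ρ n i) * (Abelianization.of (σ n j) * Abelianization.of (σ n i))
      = Abelianization.of (ρ n j) * (Abelianization.of (σ n j) * Abelianization.of (σ n i)) := by
    rw [← mul_assoc, h1]; exact mul_comm _ _
  exact mul_right_cancel h2

lemma ab_σ_zero {n : ℕ} (h0 : 0 < n - 1) :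
    ∀ (k : ℕ) (hk : k < n - 1),
      Abelianization.of (σ n ⟨k, hk⟩) = Abelianization.of (σ n ⟨0, h0⟩)
  | 0, hk => rfl
  | (k+1), hk => by
      have hk' : k < n - 1 := by omega
      have hstep := ab_σ_step (n := n) (i := ⟨k, hk'⟩) (j := ⟨k+1, hk⟩) rfl
      rw [← hstep]
      exact ab_σ_zero h0 k hk'

lemma ab_ρ_zero {n : ℕ} (h0 : 0 < n - 1) :
    ∀ (k : ℕ) (hk : k < n - 1),
      Abelianization.of (ρ n ⟨k, hk⟩) = Abelianization.of (ρ n ⟨0, h0⟩)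
  | 0, hk => rfl
  | (k+1), hk => by
      have hk' : k < n - 1 := by omega
      have hstep := ab_ρ_step (n := n) (i := ⟨k, hk'⟩) (j := ⟨k+1, hk⟩) rfl
      rw [← hstep]
      exact ab_ρ_zero h0 k hk'


end SingBraid

/- ### Abstract group identities -/

section Abstract
variable {G : Type*} [Group G]

theorem swL {a b : G} (h : Commute a b) (x : G) : b * (a * x) = a * (b * x) := by
  rw [← mul_assoc, ← h.eq, mul_assoc]

theorem swE {a b : G} (h : Commute a b) : b * a = a * b := h.eq.symm

theorem conj_eq_self {g z : G} (h : Commute g z) : g * z * g⁻¹ = z := by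
  rw [h.eq, mul_inv_cancel_right]

theorem conj_eq_self' {g z : G} (h : Commute g z) : g⁻¹ * z * g = z := by
  rw [h.inv_left.eq, inv_mul_cancel_right]

variable {s1 s2 s4 r1 r2 r4 : G}

theorem K1 (c41 : Commute s4 s1) (c42 : Commute s4 s2) :
    s1 * (s2 * s1⁻¹) * s1⁻¹ = (s4 * s1⁻¹)⁻¹ * ((s2 * s1⁻¹) * (s4 * s1⁻¹)) := by
  simp only [mul_assoc, mul_inv_rev, inv_inv, one_mul, mul_one, inv_mul_cancel_left,
    mul_inv_cancel_left, inv_mul_cancel, mul_inv_cancel,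
    swL c41, swL c41.inv_left, swL c41.inv_right, swL c41.inv_left.inv_right,
    swE c41, swE c41.inv_left, swE c41.inv_right, swE c41.inv_left.inv_right,
    swL c42, swL c42.inv_left, swL c42.inv_right, swL c42.inv_left.inv_right,
    swE c42, swE c42.inv_left, swE c42.inv_right, swE c42.inv_left.inv_right]

theorem K2 (c41 : Commute s4 s1) (c42 : Commute s4 s2) :
    s1⁻¹ * (s2 * s1⁻¹) * s1 = (s4 * s1⁻¹) * ((s2 * s1⁻¹) * (s4 * s1⁻¹)⁻¹) := by
  simp only [mul_assoc, mul_inv_rev, inv_inv, one_mul, mul_one, inv_mul_cancel_left,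
    mul_inv_cancel_left, inv_mul_cancel, mul_inv_cancel,
    swL c41, swL c41.inv_left, swL c41.inv_right, swL c41.inv_left.inv_right,
    swE c41, swE c41.inv_left, swE c41.inv_right, swE c41.inv_left.inv_right,
    swL c42, swL c42.inv_left, swL c42.inv_right, swL c42.inv_left.inv_right,
    swE c42, swE c42.inv_left, swE c42.inv_right, swE c42.inv_left.inv_right]

theorem K3 (cr41 : Commute r4 s1) (cr42 : Commute r4 s2) (cr4r1 : Commute r4 r1)
    (c1r1 : Commute s1 r1) :
    r1 * (s2 * s1⁻¹) * r1⁻¹ = (r4 * r1⁻¹)⁻¹ * ((s2 * s1⁻¹) * (r4 * r1⁻¹)) := by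
  simp only [mul_assoc, mul_inv_rev, inv_inv, one_mul, mul_one, inv_mul_cancel_left,
    mul_inv_cancel_left, inv_mul_cancel, mul_inv_cancel,
    swL cr41, swL cr41.inv_left, swL cr41.inv_right, swL cr41.inv_left.inv_right,
    swE cr41, swE cr41.inv_left, swE cr41.inv_right, swE cr41.inv_left.inv_right,
    swL cr42, swL cr42.inv_left, swL cr42.inv_right, swL cr42.inv_left.inv_right,
    swE cr42, swE cr42.inv_left, swE cr42.inv_right, swE cr42.inv_left.inv_right,
    swL cr4r1, swL cr4r1.inv_left, swL cr4r1.inv_right, swL cr4r1.inv_left.inv_right,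
    swE cr4r1, swE cr4r1.inv_left, swE cr4r1.inv_right, swE cr4r1.inv_left.inv_right,
    swL c1r1, swL c1r1.inv_left, swL c1r1.inv_right, swL c1r1.inv_left.inv_right,
    swE c1r1, swE c1r1.inv_left, swE c1r1.inv_right, swE c1r1.inv_left.inv_right]

theorem K4 (cr41 : Commute r4 s1) (cr42 : Commute r4 s2) (cr4r1 : Commute r4 r1)
    (c1r1 : Commute s1 r1) :
    r1⁻¹ * (s2 * s1⁻¹) * r1 = (r4 * r1⁻¹) * ((s2 * s1⁻¹) * (r4 * r1⁻¹)⁻¹) := by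
  simp only [mul_assoc, mul_inv_rev, inv_inv, one_mul, mul_one, inv_mul_cancel_left,
    mul_inv_cancel_left, inv_mul_cancel, mul_inv_cancel,
    swL cr41, swL cr41.inv_left, swL cr41.inv_right, swL cr41.inv_left.inv_right,
    swE cr41, swE cr41.inv_left, swE cr41.inv_right, swE cr41.inv_left.inv_right,
    swL cr42, swL cr42.inv_left, swL cr42.inv_right, swL cr42.inv_left.inv_right,
    swE cr42, swE cr42.inv_left, swE cr42.inv_right, swE cr42.inv_left.inv_right,
    swL cr4r1, swL cr4r1.inv_left, swL cr4r1.inv_right, swL cr4r1.inv_left.inv_right,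
    swE cr4r1, swE cr4r1.inv_left, swE cr4r1.inv_right, swE cr4r1.inv_left.inv_right,
    swL c1r1, swL c1r1.inv_left, swL c1r1.inv_right, swL c1r1.inv_left.inv_right,
    swE c1r1, swE c1r1.inv_left, swE c1r1.inv_right, swE c1r1.inv_left.inv_right]

theorem K5 (c41 : Commute s4 s1) (c42 : Commute s4 s2) (c44 : Commute s4 r4)
    (c4r1 : Commute s4 r1) (cr41 : Commute r4 s1) (cr42 : Commute r4 s2)
    (cr4r1 : Commute r4 r1) (c1r1 : Commute s1 r1)
    (hR4 : r2 * s1 * s2 = s1 * s2 * r1) :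
    s1 * (r2 * r1⁻¹) * s1⁻¹ =
    ((s4*s1⁻¹)⁻¹ * ((s4*s1⁻¹)⁻¹ * (s2*s1⁻¹) * (s4*s1⁻¹)) * (s4*s1⁻¹)) *
    ((r4*r1⁻¹)⁻¹ * ((s4*s1⁻¹)⁻¹ * ((s4*s1⁻¹)⁻¹ * (s2*s1⁻¹)⁻¹ * (s4*s1⁻¹)) * (s4*s1⁻¹)) * (r4*r1⁻¹)) := by
  have hr2 : r2 = s1 * s2 * r1 * s2⁻¹ * s1⁻¹ := by rw [← hR4]; group
  rw [hr2]
  simp only [mul_assoc, mul_inv_rev, inv_inv, one_mul, mul_one, inv_mul_cancel_left,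
    mul_inv_cancel_left, inv_mul_cancel, mul_inv_cancel,
    swL c41, swL c41.inv_left, swL c41.inv_right, swL c41.inv_left.inv_right,
    swE c41, swE c41.inv_left, swE c41.inv_right, swE c41.inv_left.inv_right,
    swL c42, swL c42.inv_left, swL c42.inv_right, swL c42.inv_left.inv_right,
    swE c42, swE c42.inv_left, swE c42.inv_right, swE c42.inv_left.inv_right,
    swL c44, swL c44.inv_left, swL c44.inv_right, swL c44.inv_left.inv_right,
    swE c44, swE c44.inv_left, swE c44.inv_right, swE c44.inv_left.inv_right,
    swL c4r1, swL c4r1.inv_left, swL c4r1.inv_right, swL c4r1.inv_left.inv_right,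
    swE c4r1, swE c4r1.inv_left, swE c4r1.inv_right, swE c4r1.inv_left.inv_right,
    swL cr41, swL cr41.inv_left, swL cr41.inv_right, swL cr41.inv_left.inv_right,
    swE cr41, swE cr41.inv_left, swE cr41.inv_right, swE cr41.inv_left.inv_right,
    swL cr42, swL cr42.inv_left, swL cr42.inv_right, swL cr42.inv_left.inv_right,
    swE cr42, swE cr42.inv_left, swE cr42.inv_right, swE cr42.inv_left.inv_right,
    swL cr4r1, swL cr4r1.inv_left, swL cr4r1.inv_right, swL cr4r1.inv_left.inv_right,
    swE cr4r1, swE cr4r1.inv_left, swE cr4r1.inv_right, swE cr4r1.inv_left.inv_right,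
    swL c1r1, swL c1r1.inv_left, swL c1r1.inv_right, swL c1r1.inv_left.inv_right,
    swE c1r1, swE c1r1.inv_left, swE c1r1.inv_right, swE c1r1.inv_left.inv_right]

theorem K6 (c41 : Commute s4 s1) (c42 : Commute s4 s2) (c44 : Commute s4 r4)
    (c4r1 : Commute s4 r1) (cr41 : Commute r4 s1) (cr42 : Commute r4 s2)
    (cr4r1 : Commute r4 r1) (c1r1 : Commute s1 r1)
    (hR4 : r2 * s1 * s2 = s1 * s2 * r1) :
    s1⁻¹ * (r2 * r1⁻¹) * s1 =
    (s2*s1⁻¹) * ((r4*r1⁻¹)⁻¹ * (s2*s1⁻¹)⁻¹ * (r4*r1⁻¹)) := by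
  have hr2 : r2 = s1 * s2 * r1 * s2⁻¹ * s1⁻¹ := by rw [← hR4]; group
  rw [hr2]
  simp only [mul_assoc, mul_inv_rev, inv_inv, one_mul, mul_one, inv_mul_cancel_left,
    mul_inv_cancel_left, inv_mul_cancel, mul_inv_cancel,
    swL c41, swL c41.inv_left, swL c41.inv_right, swL c41.inv_left.inv_right,
    swE c41, swE c41.inv_left, swE c41.inv_right, swE c41.inv_left.inv_right,
    swL c42, swL c42.inv_left, swL c42.inv_right, swL c42.inv_left.inv_right,
    swE c42, swE c42.inv_left, swE c42.inv_right, swE c42.inv_left.inv_right,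
    swL c44, swL c44.inv_left, swL c44.inv_right, swL c44.inv_left.inv_right,
    swE c44, swE c44.inv_left, swE c44.inv_right, swE c44.inv_left.inv_right,
    swL c4r1, swL c4r1.inv_left, swL c4r1.inv_right, swL c4r1.inv_left.inv_right,
    swE c4r1, swE c4r1.inv_left, swE c4r1.inv_right, swE c4r1.inv_left.inv_right,
    swL cr41, swL cr41.inv_left, swL cr41.inv_right, swL cr41.inv_left.inv_right,
    swE cr41, swE cr41.inv_left, swE cr41.inv_right, swE cr41.inv_left.inv_right,
    swL cr42, swL cr42.inv_left, swL cr42.inv_right, swL cr42.inv_left.inv_right,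
    swE cr42, swE cr42.inv_left, swE cr42.inv_right, swE cr42.inv_left.inv_right,
    swL cr4r1, swL cr4r1.inv_left, swL cr4r1.inv_right, swL cr4r1.inv_left.inv_right,
    swE cr4r1, swE cr4r1.inv_left, swE cr4r1.inv_right, swE cr4r1.inv_left.inv_right,
    swL c1r1, swL c1r1.inv_left, swL c1r1.inv_right, swL c1r1.inv_left.inv_right,
    swE c1r1, swE c1r1.inv_left, swE c1r1.inv_right, swE c1r1.inv_left.inv_right]

theorem K7 (c41 : Commute s4 s1) (c42 : Commute s4 s2) (c44 : Commute s4 r4)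
    (c4r1 : Commute s4 r1) (cr41 : Commute r4 s1) (cr42 : Commute r4 s2)
    (cr4r1 : Commute r4 r1) (c1r1 : Commute s1 r1)
    (hR4 : r2 * s1 * s2 = s1 * s2 * r1) :
    r1 * (r2 * r1⁻¹) * r1⁻¹ =
    ((r4*r1⁻¹)⁻¹ * ((s4*s1⁻¹)⁻¹ * (s2*s1⁻¹) * (s4*s1⁻¹)) * (r4*r1⁻¹)) *
    ((r4*r1⁻¹)⁻¹ * ((r4*r1⁻¹)⁻¹ * ((s4*s1⁻¹)⁻¹ * (s2*s1⁻¹)⁻¹ * (s4*s1⁻¹)) * (r4*r1⁻¹)) * (r4*r1⁻¹)) := by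
  have hr2 : r2 = s1 * s2 * r1 * s2⁻¹ * s1⁻¹ := by rw [← hR4]; group
  rw [hr2]
  simp only [mul_assoc, mul_inv_rev, inv_inv, one_mul, mul_one, inv_mul_cancel_left,
    mul_inv_cancel_left, inv_mul_cancel, mul_inv_cancel,
    swL c41, swL c41.inv_left, swL c41.inv_right, swL c41.inv_left.inv_right,
    swE c41, swE c41.inv_left, swE c41.inv_right, swE c41.inv_left.inv_right,
    swL c42, swL c42.inv_left, swL c42.inv_right, swL c42.inv_left.inv_right,
    swE c42, swE c42.inv_left, swE c42.inv_right, swE c42.inv_left.inv_right,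
    swL c44, swL c44.inv_left, swL c44.inv_right, swL c44.inv_left.inv_right,
    swE c44, swE c44.inv_left, swE c44.inv_right, swE c44.inv_left.inv_right,
    swL c4r1, swL c4r1.inv_left, swL c4r1.inv_right, swL c4r1.inv_left.inv_right,
    swE c4r1, swE c4r1.inv_left, swE c4r1.inv_right, swE c4r1.inv_left.inv_right,
    swL cr41, swL cr41.inv_left, swL cr41.inv_right, swL cr41.inv_left.inv_right,
    swE cr41, swE cr41.inv_left, swE cr41.inv_right, swE cr41.inv_left.inv_right,
    swL cr42, swL cr42.inv_left, swL cr42.inv_right, swL cr42.inv_left.inv_right,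
    swE cr42, swE cr42.inv_left, swE cr42.inv_right, swE cr42.inv_left.inv_right,
    swL cr4r1, swL cr4r1.inv_left, swL cr4r1.inv_right, swL cr4r1.inv_left.inv_right,
    swE cr4r1, swE cr4r1.inv_left, swE cr4r1.inv_right, swE cr4r1.inv_left.inv_right,
    swL c1r1, swL c1r1.inv_left, swL c1r1.inv_right, swL c1r1.inv_left.inv_right,
    swE c1r1, swE c1r1.inv_left, swE c1r1.inv_right, swE c1r1.inv_left.inv_right]

theorem K8 (c41 : Commute s4 s1) (c42 : Commute s4 s2) (c44 : Commute s4 r4)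
    (c4r1 : Commute s4 r1) (cr41 : Commute r4 s1) (cr42 : Commute r4 s2)
    (cr4r1 : Commute r4 r1) (c1r1 : Commute s1 r1)
    (hR4 : r2 * s1 * s2 = s1 * s2 * r1) :
    r1⁻¹ * (r2 * r1⁻¹) * r1 =
    ((r4*r1⁻¹) * ((s4*s1⁻¹)⁻¹ * (s2*s1⁻¹) * (s4*s1⁻¹)) * (r4*r1⁻¹)⁻¹) *
    ((s4*s1⁻¹)⁻¹ * (s2*s1⁻¹)⁻¹ * (s4*s1⁻¹)) := by
  have hr2 : r2 = s1 * s2 * r1 * s2⁻¹ * s1⁻¹ := by rw [← hR4]; group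
  rw [hr2]
  simp only [mul_assoc, mul_inv_rev, inv_inv, one_mul, mul_one, inv_mul_cancel_left,
    mul_inv_cancel_left, inv_mul_cancel, mul_inv_cancel,
    swL c41, swL c41.inv_left, swL c41.inv_right, swL c41.inv_left.inv_right,
    swE c41, swE c41.inv_left, swE c41.inv_right, swE c41.inv_left.inv_right,
    swL c42, swL c42.inv_left, swL c42.inv_right, swL c42.inv_left.inv_right,
    swE c42, swE c42.inv_left, swE c42.inv_right, swE c42.inv_left.inv_right,
    swL c44, swL c44.inv_left, swL c44.inv_right, swL c44.inv_left.inv_right,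
    swE c44, swE c44.inv_left, swE c44.inv_right, swE c44.inv_left.inv_right,
    swL c4r1, swL c4r1.inv_left, swL c4r1.inv_right, swL c4r1.inv_left.inv_right,
    swE c4r1, swE c4r1.inv_left, swE c4r1.inv_right, swE c4r1.inv_left.inv_right,
    swL cr41, swL cr41.inv_left, swL cr41.inv_right, swL cr41.inv_left.inv_right,
    swE cr41, swE cr41.inv_left, swE cr41.inv_right, swE cr41.inv_left.inv_right,
    swL cr42, swL cr42.inv_left, swL cr42.inv_right, swL cr42.inv_left.inv_right,
    swE cr42, swE cr42.inv_left, swE cr42.inv_right, swE cr42.inv_left.inv_right,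
    swL cr4r1, swL cr4r1.inv_left, swL cr4r1.inv_right, swL cr4r1.inv_left.inv_right,
    swE cr4r1, swE cr4r1.inv_left, swE cr4r1.inv_right, swE cr4r1.inv_left.inv_right,
    swL c1r1, swL c1r1.inv_left, swL c1r1.inv_right, swL c1r1.inv_left.inv_right,
    swE c1r1, swE c1r1.inv_left, swE c1r1.inv_right, swE c1r1.inv_left.inv_right]

end Abstract

/- ### The generating set and the main closure computation -/

namespace SingBraid

/-- The candidate generating set of the commutator subgroup:
`σ_i σ_1⁻¹` and `ρ_i ρ_1⁻¹` for `i ≠ 1`. -/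
def gens (n : ℕ) (h0 : 0 < n - 1) : Set (SG n) :=
  {x | ∃ i : Fin (n-1), i ≠ ⟨0, h0⟩ ∧
    (x = σ n i * (σ n ⟨0, h0⟩)⁻¹ ∨ x = ρ n i * (ρ n ⟨0, h0⟩)⁻¹)}

open scoped commutatorElement in
theorem closure_gens_eq (n : ℕ) (hn : 5 ≤ n) (h0 : 0 < n - 1) :
    Subgroup.closure (gens n h0) = commutator (SG n) := by
  have h1 : 1 < n - 1 := by omega
  have h3 : 3 < n - 1 := by omega
  set i0 : Fin (n-1) := ⟨0, h0⟩ with hi0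
  set i1 : Fin (n-1) := ⟨1, h1⟩ with hi1
  set i3 : Fin (n-1) := ⟨3, h3⟩ with hi3
  set s1 : SG n := σ n i0 with hs1
  set s2 : SG n := σ n i1 with hs2
  set s4 : SG n := σ n i3 with hs4
  set r1 : SG n := ρ n i0 with hr1
  set r2 : SG n := ρ n i1 with hr2
  set r4 : SG n := ρ n i3 with hr4
  set H : Subgroup (SG n) := Subgroup.closure (gens n h0) with hH
  -- basic commutation relations between the distinguished generators
  have v0 : (i0 : ℕ) = 0 := rfl
  have v1 : (i1 : ℕ) = 1 := rfl
  have v3 : (i3 : ℕ) = 3 := rfl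
  have c41 : Commute s4 s1 := (comm_σσ (i := i0) (j := i3) (Or.inl (by omega))).symm
  have c42 : Commute s4 s2 := (comm_σσ (i := i1) (j := i3) (Or.inl (by omega))).symm
  have c44 : Commute s4 r4 := comm_σρ (i := i3) (j := i3) (Or.inl rfl)
  have c4r1 : Commute s4 r1 := comm_σρ (i := i3) (j := i0) (Or.inr (Or.inr (by omega)))
  have cr41 : Commute r4 s1 := (comm_σρ (i := i0) (j := i3) (Or.inr (Or.inl (by omega)))).symm
  have cr42 : Commute r4 s2 := (comm_σρ (i := i1) (j := i3) (Or.inr (Or.inl (by omega)))).symm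
  have cr4r1 : Commute r4 r1 := (comm_ρρ (i := i0) (j := i3) (Or.inl (by omega))).symm
  have c1r1 : Commute s1 r1 := comm_σρ (i := i0) (j := i0) (Or.inl rfl)
  have hR4 : r2 * s1 * s2 = s1 * s2 * r1 :=
    rel_mix2 (i := i0) (j := i1) (by omega)
  -- membership of the generators in H
  have hmemA : ∀ i : Fin (n-1), i ≠ i0 → σ n i * (σ n i0)⁻¹ ∈ H := by
    intro i hi
    rw [hH]
    exact Subgroup.subset_closure (show _ ∈ gens n h0 from ⟨i, hi, Or.inl rfl⟩)
  have hmemB : ∀ i : Fin (n-1), i ≠ i0 → ρ n i * (ρ n i0)⁻¹ ∈ H := by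
    intro i hi
    rw [hH]
    exact Subgroup.subset_closure (show _ ∈ gens n h0 from ⟨i, hi, Or.inr rfl⟩)
  have hne1 : i1 ≠ i0 := Fin.ne_of_val_ne (by omega)
  have hne3 : i3 ≠ i0 := Fin.ne_of_val_ne (by omega)
  have ha2 : s2 * s1⁻¹ ∈ H := hmemA i1 hne1
  have ha4 : s4 * s1⁻¹ ∈ H := hmemA i3 hne3
  have hb2 : r2 * r1⁻¹ ∈ H := hmemB i1 hne1
  have hb4 : r4 * r1⁻¹ ∈ H := hmemB i3 hne3
  -- a helper to split a generator of the set
  have hsplit : ∀ i : Fin (n-1), i ≠ i0 → i = i1 ∨ 2 ≤ (i : ℕ) := by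
    intro i hi
    have : (i : ℕ) ≠ 0 := fun h => hi (Fin.ext h)
    rcases Nat.lt_or_ge (i : ℕ) 2 with h | h
    · left; exact Fin.ext (by omega)
    · right; exact h
  -- commutation of s1, r1 with far generators
  have cfarσσ : ∀ i : Fin (n-1), 2 ≤ (i : ℕ) → Commute s1 (σ n i) :=
    fun i hi => comm_σσ (i := i0) (j := i) (Or.inl (by omega))
  have cfarσρ : ∀ i : Fin (n-1), 2 ≤ (i : ℕ) → Commute s1 (ρ n i) :=
    fun i hi => comm_σρ (i := i0) (j := i) (Or.inr (Or.inl (by omega)))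
  have cfarρσ : ∀ i : Fin (n-1), 2 ≤ (i : ℕ) → Commute r1 (σ n i) :=
    fun i hi => (comm_σρ (i := i) (j := i0) (Or.inr (Or.inr (by omega)))).symm
  have cfarρρ : ∀ i : Fin (n-1), 2 ≤ (i : ℕ) → Commute r1 (ρ n i) :=
    fun i hi => comm_ρρ (i := i0) (j := i) (Or.inl (by omega))
  have cs1s1i : Commute s1 s1⁻¹ := (Commute.refl s1).inv_right
  have cs1r1i : Commute s1 r1⁻¹ := c1r1.inv_right
  have cr1s1i : Commute r1 s1⁻¹ := c1r1.symm.inv_right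
  have cr1r1i : Commute r1 r1⁻¹ := (Commute.refl r1).inv_right
  -- conjugation of the generating set by s1, s1⁻¹, r1, r1⁻¹
  have conj_s1 : ∀ x ∈ gens n h0, s1 * x * s1⁻¹ ∈ H := by
    rintro x ⟨i, hi, rfl | rfl⟩
    · rcases hsplit i hi with rfl | hv
      · rw [K1 c41 c42]
        exact mul_mem (inv_mem ha4) (mul_mem ha2 ha4)
      · rw [conj_eq_self ((cfarσσ i hv).mul_right cs1s1i)]
        exact hmemA i hi
    · rcases hsplit i hi with rfl | hv
      · rw [K5 c41 c42 c44 c4r1 cr41 cr42 cr4r1 c1r1 hR4]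
        exact mul_mem
          (mul_mem (mul_mem (inv_mem ha4) (mul_mem (mul_mem (inv_mem ha4) ha2) ha4)) ha4)
          (mul_mem (mul_mem (inv_mem hb4)
            (mul_mem (mul_mem (inv_mem ha4) (mul_mem (mul_mem (inv_mem ha4) (inv_mem ha2)) ha4)) ha4)) hb4)
      · rw [conj_eq_self ((cfarσρ i hv).mul_right cs1r1i)]
        exact hmemB i hi
  have conj_s1' : ∀ x ∈ gens n h0, s1⁻¹ * x * s1 ∈ H := by
    rintro x ⟨i, hi, rfl | rfl⟩
    · rcases hsplit i hi with rfl | hv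
      · rw [K2 c41 c42]
        exact mul_mem ha4 (mul_mem ha2 (inv_mem ha4))
      · rw [conj_eq_self' ((cfarσσ i hv).mul_right cs1s1i)]
        exact hmemA i hi
    · rcases hsplit i hi with rfl | hv
      · rw [K6 c41 c42 c44 c4r1 cr41 cr42 cr4r1 c1r1 hR4]
        exact mul_mem ha2 (mul_mem (mul_mem (inv_mem hb4) (inv_mem ha2)) hb4)
      · rw [conj_eq_self' ((cfarσρ i hv).mul_right cs1r1i)]
        exact hmemB i hi
  have conj_r1 : ∀ x ∈ gens n h0, r1 * x * r1⁻¹ ∈ H := by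
    rintro x ⟨i, hi, rfl | rfl⟩
    · rcases hsplit i hi with rfl | hv
      · rw [K3 cr41 cr42 cr4r1 c1r1]
        exact mul_mem (inv_mem hb4) (mul_mem ha2 hb4)
      · rw [conj_eq_self ((cfarρσ i hv).mul_right cr1s1i)]
        exact hmemA i hi
    · rcases hsplit i hi with rfl | hv
      · rw [K7 c41 c42 c44 c4r1 cr41 cr42 cr4r1 c1r1 hR4]
        exact mul_mem
          (mul_mem (mul_mem (inv_mem hb4) (mul_mem (mul_mem (inv_mem ha4) ha2) ha4)) hb4)
          (mul_mem (mul_mem (inv_mem hb4)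
            (mul_mem (mul_mem (inv_mem hb4) (mul_mem (mul_mem (inv_mem ha4) (inv_mem ha2)) ha4)) hb4)) hb4)
      · rw [conj_eq_self ((cfarρρ i hv).mul_right cr1r1i)]
        exact hmemB i hi
  have conj_r1' : ∀ x ∈ gens n h0, r1⁻¹ * x * r1 ∈ H := by
    rintro x ⟨i, hi, rfl | rfl⟩
    · rcases hsplit i hi with rfl | hv
      · rw [K4 cr41 cr42 cr4r1 c1r1]
        exact mul_mem hb4 (mul_mem ha2 (inv_mem hb4))
      · rw [conj_eq_self' ((cfarρσ i hv).mul_right cr1s1i)]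
        exact hmemA i hi
    · rcases hsplit i hi with rfl | hv
      · rw [K8 c41 c42 c44 c4r1 cr41 cr42 cr4r1 c1r1 hR4]
        exact mul_mem
          (mul_mem (mul_mem hb4 (mul_mem (mul_mem (inv_mem ha4) ha2) ha4)) (inv_mem hb4))
          (mul_mem (mul_mem (inv_mem ha4) (inv_mem ha2)) ha4)
      · rw [conj_eq_self' ((cfarρρ i hv).mul_right cr1r1i)]
        exact hmemB i hi
  -- extend conjugation stability from the generating set to all of H
  have step : ∀ g : SG n, (∀ x ∈ gens n h0, g * x * g⁻¹ ∈ H) → ∀ h ∈ H, g * h * g⁻¹ ∈ H := by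
    intro g hg h hh
    have hmap : H.map (MulAut.conj g).toMonoidHom ≤ H := by
      rw [hH, MonoidHom.map_closure, Subgroup.closure_le]
      rintro y ⟨x, hx, rfl⟩
      simpa [MulAut.conj_apply] using Subgroup.subset_closure.trans_eq rfl (hg x hx)
    have := hmap (Subgroup.mem_map_of_mem _ hh)
    simpa [MulAut.conj_apply] using this
  have cs1 : ∀ h ∈ H, s1 * h * s1⁻¹ ∈ H := step s1 conj_s1
  have cs1i : ∀ h ∈ H, s1⁻¹ * h * s1 ∈ H := by
    have := step s1⁻¹ (by intro x hx; rw [inv_inv]; exact conj_s1' x hx)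
    intro h hh; have h2 := this h hh; rwa [inv_inv] at h2
  have cr1m : ∀ h ∈ H, r1 * h * r1⁻¹ ∈ H := step r1 conj_r1
  have cr1i : ∀ h ∈ H, r1⁻¹ * h * r1 ∈ H := by
    have := step r1⁻¹ (by intro x hx; rw [inv_inv]; exact conj_r1' x hx)
    intro h hh; have h2 := this h hh; rwa [inv_inv] at h2
  -- decomposition of every generator of SG n
  have decσ : ∀ i : Fin (n-1), s1⁻¹ * σ n i ∈ H := by
    intro i
    by_cases hi : i = i0
    · subst hi; rw [inv_mul_cancel]; exact one_mem H
    · rcases hsplit i hi with rfl | hv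
      · have e : s1⁻¹ * s2 = s1⁻¹ * (s2 * s1⁻¹) * s1 := by group
        rw [e, K2 c41 c42]
        exact mul_mem ha4 (mul_mem ha2 (inv_mem ha4))
      · have e : s1⁻¹ * σ n i = σ n i * s1⁻¹ := (cfarσσ i hv).inv_left.eq
        rw [e]; exact hmemA i hi
  have decρ : ∀ i : Fin (n-1), r1⁻¹ * ρ n i ∈ H := by
    intro i
    by_cases hi : i = i0
    · subst hi; rw [inv_mul_cancel]; exact one_mem H
    · rcases hsplit i hi with rfl | hv
      · have e : r1⁻¹ * r2 = r1⁻¹ * (r2 * r1⁻¹) * r1 := by group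
        rw [e, K8 c41 c42 c44 c4r1 cr41 cr42 cr4r1 c1r1 hR4]
        exact mul_mem
          (mul_mem (mul_mem hb4 (mul_mem (mul_mem (inv_mem ha4) ha2) ha4)) (inv_mem hb4))
          (mul_mem (mul_mem (inv_mem ha4) (inv_mem ha2)) ha4)
      · have e : r1⁻¹ * ρ n i = ρ n i * r1⁻¹ := (cfarρρ i hv).inv_left.eq
        rw [e]; exact hmemB i hi
  -- H is normal
  let N : Subgroup (SG n) :=
    { carrier := {g | ∀ h ∈ H, g * h * g⁻¹ ∈ H ∧ g⁻¹ * h * g ∈ H}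
      one_mem' := by
        intro h hh
        refine ⟨?_, ?_⟩ <;> simpa using hh
      mul_mem' := by
        intro a b ha hb
        intro h hh
        constructor
        · have e : a * b * h * (a * b)⁻¹ = a * (b * h * b⁻¹) * a⁻¹ := by group
          rw [e]; exact (ha _ (hb h hh).1).1
        · have e : (a * b)⁻¹ * h * (a * b) = b⁻¹ * (a⁻¹ * h * a) * b := by group
          rw [e]; exact (hb _ (ha h hh).2).2
      inv_mem' := by
        intro a ha h hh
        constructor
        · have e : a⁻¹ * h * a⁻¹⁻¹ = a⁻¹ * h * a := by rw [inv_inv]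
          rw [e]; exact (ha h hh).2
        · have e : a⁻¹⁻¹ * h * a⁻¹ = a * h * a⁻¹ := by rw [inv_inv]
          rw [e]; exact (ha h hh).1 }
  have hNmem : ∀ g : SG n, g ∈ N := by
    intro g
    refine PresentedGroup.generated_by (sgRels n) N ?_ g
    intro j
    rcases j with i | i
    · show σ n i ∈ N
      intro h hh
      constructor
      · have e : σ n i * h * (σ n i)⁻¹
            = s1 * ((s1⁻¹ * σ n i) * h * (s1⁻¹ * σ n i)⁻¹) * s1⁻¹ := by group
        rw [e]
        exact cs1 _ (mul_mem (mul_mem (decσ i) hh) (inv_mem (decσ i)))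
      · have e : (σ n i)⁻¹ * h * σ n i
            = (s1⁻¹ * σ n i)⁻¹ * (s1⁻¹ * h * s1) * (s1⁻¹ * σ n i) := by group
        rw [e]
        exact mul_mem (mul_mem (inv_mem (decσ i)) (cs1i h hh)) (decσ i)
    · show ρ n i ∈ N
      intro h hh
      constructor
      · have e : ρ n i * h * (ρ n i)⁻¹
            = r1 * ((r1⁻¹ * ρ n i) * h * (r1⁻¹ * ρ n i)⁻¹) * r1⁻¹ := by group
        rw [e]
        exact cr1m _ (mul_mem (mul_mem (decρ i) hh) (inv_mem (decρ i)))
      · have e : (ρ n i)⁻¹ * h * ρ n i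
            = (r1⁻¹ * ρ n i)⁻¹ * (r1⁻¹ * h * r1) * (r1⁻¹ * ρ n i) := by group
        rw [e]
        exact mul_mem (mul_mem (inv_mem (decρ i)) (cr1i h hh)) (decρ i)
  have hNormal : H.Normal := ⟨fun h hh g => (hNmem g h hh).1⟩
  -- now prove the two inclusions
  apply le_antisymm
  · -- H ≤ commutator
    rw [hH, Subgroup.closure_le]
    rintro x ⟨i, hi, rfl | rfl⟩
    · have hab : Abelianization.of (σ n i * (σ n i0)⁻¹) = 1 := by
        have h1 : Abelianization.of (σ n i) = Abelianization.of (σ n i0) := by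
          have := ab_σ_zero (n := n) h0 (i : ℕ) i.isLt
          simpa [Fin.eta] using this
        rw [map_mul, map_inv, h1, mul_inv_cancel]
      exact (QuotientGroup.eq_one_iff _).mp hab
    · have hab : Abelianization.of (ρ n i * (ρ n i0)⁻¹) = 1 := by
        have h1 : Abelianization.of (ρ n i) = Abelianization.of (ρ n i0) := by
          have := ab_ρ_zero (n := n) h0 (i : ℕ) i.isLt
          simpa [Fin.eta] using this
        rw [map_mul, map_inv, h1, mul_inv_cancel]
      exact (QuotientGroup.eq_one_iff _).mp hab
  · -- commutator ≤ H
    haveI := hNormal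
    rw [commutator_def, Subgroup.commutator_le]
    intro g₁ _ g₂ _
    set π := QuotientGroup.mk' H with hπ
    have hπσ : ∀ i : Fin (n-1), π (σ n i) = π s1 := by
      intro i
      have h1 : (QuotientGroup.mk (s1⁻¹ * σ n i) : SG n ⧸ H) = 1 :=
        (QuotientGroup.eq_one_iff _).mpr (decσ i)
      rw [QuotientGroup.mk_mul, QuotientGroup.mk_inv] at h1
      exact (inv_mul_eq_one.mp h1).symm
    have hπρ : ∀ i : Fin (n-1), π (ρ n i) = π r1 := by
      intro i
      have h1 : (QuotientGroup.mk (r1⁻¹ * ρ n i) : SG n ⧸ H) = 1 :=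
        (QuotientGroup.eq_one_iff _).mpr (decρ i)
      rw [QuotientGroup.mk_mul, QuotientGroup.mk_inv] at h1
      exact (inv_mul_eq_one.mp h1).symm
    have hcπ : Commute (π s1) (π r1) := c1r1.map π
    -- every image commutes with π s1 and π r1
    have hcomm1 : ∀ g : SG n, π g ∈ Subgroup.centralizer {π s1, π r1} := by
      intro g
      refine PresentedGroup.generated_by (sgRels n)
        ((Subgroup.centralizer {π s1, π r1}).comap π) ?_ g
      intro j
      rcases j with i | i
      · show π (σ n i) ∈ Subgroup.centralizer {π s1, π r1}
        rw [hπσ i, Subgroup.mem_centralizer_iff]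
        rintro h (rfl | rfl)
        · rfl
        · exact hcπ.symm.eq
      · show π (ρ n i) ∈ Subgroup.centralizer {π s1, π r1}
        rw [hπρ i, Subgroup.mem_centralizer_iff]
        rintro h (rfl | rfl)
        · exact hcπ.eq
        · rfl
    have hcomm2 : ∀ g₁ g₂ : SG n, Commute (π g₁) (π g₂) := by
      intro g₁ g₂
      have : π g₂ ∈ Subgroup.centralizer {π g₁} := by
        refine PresentedGroup.generated_by (sgRels n)
          ((Subgroup.centralizer {π g₁}).comap π) ?_ g₂
        intro j
        rcases j with i | i
        · show π (σ n i) ∈ Subgroup.centralizer {π g₁}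
          rw [hπσ i, Subgroup.mem_centralizer_iff]
          rintro h rfl
          have := Subgroup.mem_centralizer_iff.mp (hcomm1 g₁) (π s1) (Or.inl rfl)
          exact this.symm
        · show π (ρ n i) ∈ Subgroup.centralizer {π g₁}
          rw [hπρ i, Subgroup.mem_centralizer_iff]
          rintro h rfl
          have := Subgroup.mem_centralizer_iff.mp (hcomm1 g₁) (π r1) (Or.inr rfl)
          exact this.symm
      exact Subgroup.mem_centralizer_iff.mp this (π g₁) rfl
    have h1 : π ⁅g₁, g₂⁆ = 1 := by
      rw [map_commutatorElement]
      exact commutatorElement_eq_one_iff_commute.mpr (hcomm2 g₁ g₂)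
    exact (QuotientGroup.eq_one_iff _).mp h1

end SingBraid

open SingBraid in
/-- For every integer `n ≥ 5`, the commutator subgroup of `SG_n` is generated by a set of
at most `2n - 4` elements. -/
theorem sg_commutator_rank_le (n : ℕ) (hn : 5 ≤ n) :
    ∃ S : Finset (SG n), S.card ≤ 2 * n - 4 ∧
      Subgroup.closure (S : Set (SG n)) = commutator (SG n) := by
  classical
  have h0 : 0 < n - 1 := by omega
  refine ⟨(Finset.univ.erase (⟨0, h0⟩ : Fin (n-1))).image
      (fun i => σ n i * (σ n ⟨0, h0⟩)⁻¹) ∪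
    (Finset.univ.erase (⟨0, h0⟩ : Fin (n-1))).image
      (fun i => ρ n i * (ρ n ⟨0, h0⟩)⁻¹), ?_, ?_⟩
  · have hcard : (Finset.univ.erase (⟨0, h0⟩ : Fin (n-1))).card = n - 2 := by
      rw [Finset.card_erase_of_mem (Finset.mem_univ _), Finset.card_univ, Fintype.card_fin]
      omega
    calc ((Finset.univ.erase (⟨0, h0⟩ : Fin (n-1))).image
          (fun i => σ n i * (σ n ⟨0, h0⟩)⁻¹) ∪
        (Finset.univ.erase (⟨0, h0⟩ : Fin (n-1))).image
          (fun i => ρ n i * (ρ n ⟨0, h0⟩)⁻¹)).card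
        ≤ ((Finset.univ.erase (⟨0, h0⟩ : Fin (n-1))).image
            (fun i => σ n i * (σ n ⟨0, h0⟩)⁻¹)).card +
          ((Finset.univ.erase (⟨0, h0⟩ : Fin (n-1))).image
            (fun i => ρ n i * (ρ n ⟨0, h0⟩)⁻¹)).card := Finset.card_union_le _ _
      _ ≤ (Finset.univ.erase (⟨0, h0⟩ : Fin (n-1))).card +
          (Finset.univ.erase (⟨0, h0⟩ : Fin (n-1))).card :=
            Nat.add_le_add Finset.card_image_le Finset.card_image_le
      _ ≤ 2 * n - 4 := by rw [hcard]; omega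
  · have hset : (((Finset.univ.erase (⟨0, h0⟩ : Fin (n-1))).image
        (fun i => σ n i * (σ n ⟨0, h0⟩)⁻¹) ∪
      (Finset.univ.erase (⟨0, h0⟩ : Fin (n-1))).image
        (fun i => ρ n i * (ρ n ⟨0, h0⟩)⁻¹) : Finset (SG n)) : Set (SG n)) = gens n h0 := by
      ext x
      simp only [Finset.coe_union, Set.mem_union, Finset.coe_image, Set.mem_image,
        Finset.mem_coe, Finset.mem_erase, Finset.mem_univ, and_true, gens, Set.mem_setOf_eq]
      constructor
      · rintro (⟨i, hi, rfl⟩ | ⟨i, hi, rfl⟩)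
        · exact ⟨i, hi, Or.inl rfl⟩
        · exact ⟨i, hi, Or.inr rfl⟩
      · rintro ⟨i, hi, rfl | rfl⟩
        · exact Or.inl ⟨i, hi, rfl⟩
        · exact Or.inr ⟨i, hi, rfl⟩
    rw [hset]
    exact closure_gens_eq n hn h0
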